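/- Let p ∈ (0,1], ε ∈ (0,1), and T a positive integer. Let X₁, X₂, … be i.i.d. Bernoulli(p) random variables and let N be the (almost surely finite) index of the T-th success, i.e., N = min{n : X₁ + ⋯ + X_n = T}. Then P(T/N < p(1-ε)) ≤ (e^{-ε/(1-ε)}/(1-ε))^T. -/

import Mathlib

open MeasureTheory ProbabilityTheory

private lemma ivt_nat (f : ℕ → ℕ) (h0 : f 0 = 0) (hstep : ∀ n, f (n+1) ≤ f n + 1)
    {T n : ℕ} (h : T ≤ f n) : ∃ k, f k = T := by
  induction n with
  | zero => exact ⟨0, by omega⟩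
  | succ n ih =>
    by_cases hc : T ≤ f n
    · exact ih hc
    · exact ⟨n+1, by have := hstep n; omega⟩

theorem negBinomial_estimator_lower_tail
    {Ω : Type*} [MeasurableSpace Ω] (μ : Measure Ω) [IsProbabilityMeasure μ]
    (p : ℝ) (hp : p ∈ Set.Ioc (0:ℝ) 1) (ε : ℝ) (hε : ε ∈ Set.Ioo (0:ℝ) 1)
    (T : ℕ) (hT : 0 < T)
    (X : ℕ → Ω → Bool) (hXmeas : ∀ i, Measurable (X i))
    (hXindep : iIndepFun X μ)
    (hXdist : ∀ i, μ {ω | X i ω = true} = ENNReal.ofReal p)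
    (N : Ω → ℕ)
    (hN : ∀ ω, N ω = sInf {n : ℕ | ∑ i ∈ Finset.range n, (if X i ω then 1 else 0) = T}) :
    μ {ω | (T : ℝ) / (N ω : ℝ) < p * (1 - ε)}
      ≤ ENNReal.ofReal ((Real.exp (-ε / (1 - ε)) / (1 - ε)) ^ T) := by
  obtain ⟨hp0, hp1⟩ := hp
  obtain ⟨hε0, hε1⟩ := hε
  have h1ε : (0:ℝ) < 1 - ε := by linarith
  have hpε : 0 < p * (1 - ε) := mul_pos hp0 h1ε
  set c : ℝ := T / (p * (1 - ε)) with hc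
  set m : ℕ := ⌈c⌉₊ with hm
  set Y : ℕ → Ω → ℝ := fun i => (fun b : Bool => if b then (1:ℝ) else 0) ∘ X i with hYdef
  have hYmeas : ∀ i, Measurable (Y i) := fun i => measurable_from_top.comp (hXmeas i)
  set t : ℝ := Real.log (1 - ε) with htdef
  have ht : t ≤ 0 := Real.log_nonpos (by linarith) (by linarith)
  have het : Real.exp t = 1 - ε := Real.exp_log h1ε
  set S : Ω → ℝ := ∑ i ∈ Finset.range m, Y i with hSdef
  have hSapp : ∀ ω, S ω = ∑ i ∈ Finset.range m, Y i ω := fun ω => Finset.sum_apply ω _ _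
  have hSmeas : Measurable S := by
    rw [show S = fun ω => ∑ i ∈ Finset.range m, Y i ω from funext hSapp]
    exact Finset.measurable_sum _ (fun i _ => hYmeas i)
  -- the nat-valued partial sum
  set f : Ω → ℕ → ℕ := fun ω n => ∑ i ∈ Finset.range n, (if X i ω then 1 else 0) with hfdef
  have hf0 : ∀ ω, f ω 0 = 0 := fun ω => by simp [hfdef]
  have hfstep : ∀ ω n, f ω (n+1) ≤ f ω n + 1 := by
    intro ω n
    simp only [hfdef, Finset.sum_range_succ]
    split <;> omega
  have hfmono : ∀ ω, Monotone (f ω) := by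
    intro ω a b hab
    exact Finset.sum_le_sum_of_subset (Finset.range_subset_range.2 hab)
  have hSf : ∀ ω, S ω = (f ω m : ℝ) := by
    intro ω
    rw [hSapp]
    simp only [hfdef, Nat.cast_sum]
    refine Finset.sum_congr rfl fun i _ => ?_
    simp only [hYdef, Function.comp_apply]
    split <;> simp
  -- event inclusion
  have hsub : {ω | (T : ℝ) / (N ω : ℝ) < p * (1 - ε)} ⊆ {ω | S ω ≤ (T:ℝ)} := by
    intro ω hω
    simp only [Set.mem_setOf_eq] at hω ⊢
    rw [hSf]
    have hfmT : f ω m ≤ T := by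
      by_cases hne : {n : ℕ | f ω n = T}.Nonempty
      · -- N ω = sInf, a member
        have hmem : N ω ∈ {n : ℕ | f ω n = T} := by
          rw [hN ω]; exact Nat.sInf_mem hne
        have hfN : f ω (N ω) = T := hmem
        have hNpos : 0 < N ω := by
          rcases Nat.eq_zero_or_pos (N ω) with h | h
          · exfalso; rw [h, hf0] at hfN; omega
          · exact h
        have hcn : c < (N ω : ℝ) := by
          rw [hc, div_lt_iff₀ hpε]
          have := (div_lt_iff₀ (by exact_mod_cast hNpos : (0:ℝ) < (N ω : ℝ))).1 hω
          linarith [this]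
        have hmn : m ≤ N ω := Nat.ceil_le.2 hcn.le
        calc f ω m ≤ f ω (N ω) := hfmono ω hmn
          _ = T := hfN
      · by_contra hgt
        push_neg at hgt
        obtain ⟨k, hk⟩ := ivt_nat (f ω) (hf0 ω) (hfstep ω) (le_of_lt hgt)
        exact hne ⟨k, hk⟩
    exact_mod_cast hfmT
  -- integrability of exp (t * Y i) and exp (t * S)
  have hYnn : ∀ i ω, 0 ≤ Y i ω := by
    intro i ω; simp only [hYdef, Function.comp_apply]; split <;> norm_num
  have hSnn : ∀ ω, 0 ≤ S ω := fun ω => by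
    rw [hSapp]; exact Finset.sum_nonneg fun i _ => hYnn i ω
  have hint : Integrable (fun ω => Real.exp (t * S ω)) μ := by
    refine Integrable.mono' (integrable_const 1) ((hSmeas.const_mul t).exp.aestronglyMeasurable) ?_
    refine Filter.Eventually.of_forall fun ω => ?_
    rw [Real.norm_eq_abs, abs_of_pos (Real.exp_pos _)]
    exact Real.exp_le_one_iff.2 (mul_nonpos_of_nonpos_of_nonneg ht (hSnn ω))
  -- mgf of each Y i
  have hmgfY : ∀ i, mgf (Y i) μ t = 1 - p * ε := by
    intro i
    have hA : MeasurableSet {ω | X i ω = true} := hXmeas i (measurableSet_singleton true)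
    have heq : (fun ω => Real.exp (t * Y i ω))
        = fun ω => 1 + Set.indicator {ω | X i ω = true} (fun _ => Real.exp t - 1) ω := by
      funext ω
      by_cases h : X i ω = true
      · simp [hYdef, h, Set.indicator_of_mem, Set.mem_setOf_eq]
      · simp only [Bool.not_eq_true] at h
        simp [hYdef, h]
    rw [mgf]
    rw [heq]
    rw [integral_add (integrable_const 1)
      ((integrable_indicator_iff hA).2 (integrableOn_const (measure_ne_top μ _) (by simp)))]
    rw [integral_const, integral_indicator_const _ hA, measureReal_def, measureReal_def, hXdist i,
      ENNReal.toReal_ofReal hp0.le, het]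
    simp
    ring
  -- independence of Y
  have hYindep : iIndepFun Y μ :=
    hXindep.comp (fun _ b => if b then (1:ℝ) else 0) (fun _ => measurable_from_top)
  have hmgfS : mgf S μ t = (1 - p * ε) ^ m := by
    rw [hSdef, hYindep.mgf_sum hYmeas]
    simp [hmgfY]
  -- Chernoff
  have hchern := measure_le_le_exp_mul_mgf (X := S) (μ := μ) (t := t) (T : ℝ) ht hint
  rw [hmgfS] at hchern
  -- final real estimate
  have hpεlt : p * ε < 1 := by nlinarith
  have hbase : (0:ℝ) ≤ 1 - p * ε := by linarith
  have hmc : c ≤ (m:ℝ) := Nat.le_ceil c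
  have hreal : Real.exp (-t * T) * (1 - p * ε) ^ m
      ≤ (Real.exp (-ε / (1 - ε)) / (1 - ε)) ^ T := by
    have h1 : (1 - p * ε) ^ m ≤ Real.exp (-(p * ε) * m) := by
      calc (1 - p * ε) ^ m ≤ (Real.exp (-(p*ε))) ^ m := by
            apply pow_le_pow_left₀ hbase
            linarith [Real.add_one_le_exp (-(p*ε))]
        _ = Real.exp (-(p*ε) * m) := by rw [mul_comm (-(p*ε)) (m:ℝ), Real.exp_nat_mul]
    have h2 : Real.exp (-(p*ε) * m) ≤ Real.exp (-(ε * T) / (1 - ε)) := by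
      apply Real.exp_le_exp.2
      have hcc : p * ε * c = ε * T / (1 - ε) := by
        rw [hc]; field_simp
      have hle : p * ε * c ≤ p * ε * m :=
        mul_le_mul_of_nonneg_left hmc (mul_pos hp0 hε0).le
      rw [neg_div, ← hcc]
      nlinarith [hle]
    have h3 : Real.exp (-t * T) = ((1 - ε)⁻¹) ^ T := by
      rw [htdef, ← Real.log_inv, mul_comm, Real.exp_nat_mul,
        Real.exp_log (by positivity)]
    have h4 : (Real.exp (-ε / (1 - ε)) / (1 - ε)) ^ T
        = Real.exp (-(ε * T) / (1 - ε)) * ((1 - ε)⁻¹) ^ T := by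
      rw [div_pow, ← Real.exp_nat_mul,
        show (T:ℝ) * (-ε / (1 - ε)) = -(ε * T) / (1 - ε) by ring,
        div_eq_mul_inv, ← inv_pow]
    calc Real.exp (-t * T) * (1 - p * ε) ^ m
        ≤ ((1 - ε)⁻¹) ^ T * Real.exp (-(ε * T) / (1 - ε)) := by
          rw [h3]
          exact mul_le_mul_of_nonneg_left (h1.trans h2) (by positivity)
      _ = (Real.exp (-ε / (1 - ε)) / (1 - ε)) ^ T := by rw [h4]; ring
  calc μ {ω | (T : ℝ) / (N ω : ℝ) < p * (1 - ε)}
      ≤ μ {ω | S ω ≤ (T:ℝ)} := measure_mono hsub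
    _ = ENNReal.ofReal ((μ {ω | S ω ≤ (T:ℝ)}).toReal) :=
        (ENNReal.ofReal_toReal (measure_ne_top μ _)).symm
    _ ≤ ENNReal.ofReal (Real.exp (-t * T) * (1 - p * ε) ^ m) :=
        ENNReal.ofReal_le_ofReal hchern
    _ ≤ ENNReal.ofReal ((Real.exp (-ε / (1 - ε)) / (1 - ε)) ^ T) :=
        ENNReal.ofReal_le_ofReal hreal
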